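/- If γ and δ are (k+1)-cores with γ strictly contained in δ, then the number of cells of γ with hook length at most k is strictly smaller than the number of cells of δ with hook length at most k. -/

import Mathlib

open scoped Classical



/-- A partition given as a weakly decreasing, finitely supported
function `ℕ → ℕ` (row `i`, counted from the bottom, has `p i` cells). -/
def IsPartitionFun (p : ℕ → ℕ) : Prop :=
  (∀ i, p (i + 1) ≤ p i) ∧ ∃ N, ∀ i, N ≤ i → p i = 0

/-- Hook length of the square `(i, j)` (0-indexed) in the partition `p`. -/
noncomputable def hookLen (p : ℕ → ℕ) (i j : ℕ) : ℕ :=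
  (p i - j) + Set.ncard {i' : ℕ | i < i' ∧ j < p i'}

/-- A partition is an `m`-core if no cell has hook length `m`. -/
def IsCore (m : ℕ) (p : ℕ → ℕ) : Prop :=
  ∀ i j, j < p i → hookLen p i j ≠ m

/-- Number of cells of row `i` of `p` whose hook length is at most `k`. -/
noncomputable def rowKB (k : ℕ) (p : ℕ → ℕ) (i : ℕ) : ℕ :=
  Set.ncard {j : ℕ | j < p i ∧ hookLen p i j ≤ k}

/-- Number of cells of column `j` of `p` whose hook length is at most `k`. -/
noncomputable def colKB (k : ℕ) (p : ℕ → ℕ) (j : ℕ) : ℕ :=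
  Set.ncard {i : ℕ | j < p i ∧ hookLen p i j ≤ k}

/-- The `(k+1)`-residue of the square `(i, j)`, namely `j - i mod (k+1)`. -/
def res (k i j : ℕ) : ZMod (k + 1) := (j : ZMod (k + 1)) - (i : ZMod (k + 1))

/-- The conjugate partition. -/
noncomputable def conjFun (p : ℕ → ℕ) (j : ℕ) : ℕ := Set.ncard {i : ℕ | j < p i}



namespace Stmt14Aux

/-- beta-like sets: cofinite below, finite above -/
def BetaLike (B : Set ℤ) : Prop :=
  ∃ N : ℤ, 0 ≤ N ∧ (∀ z, z < -N → z ∈ B) ∧ (∀ z, N < z → z ∉ B)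

def CoreSet (m : ℤ) (B : Set ℤ) : Prop := ∀ b ∈ B, b - m ∈ B

noncomputable def Fc (B : Set ℤ) (x : ℤ) : ℕ := (B ∩ Set.Ici x).ncard

def Dom (C D : Set ℤ) : Prop := ∀ x, Fc C x ≤ Fc D x

def EqBelow (C D : Set ℤ) : Prop := ∃ M : ℤ, ∀ x, x ≤ M → Fc C x = Fc D x

def Pk (m : ℤ) (B : Set ℤ) : Set (ℤ × ℤ) :=
  {q | q.1 ∈ B ∧ q.2 ∉ B ∧ q.2 < q.1 ∧ q.1 < q.2 + m}

noncomputable def sg (m a z : ℤ) : ℤ :=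
  if m ∣ (z - a) then z + 1 else if m ∣ (z - a - 1) then z - 1 else z

def SD (m a : ℤ) (B : Set ℤ) : Set ℤ := {z | sg m a z ∈ B}

section SG
variable {m a : ℤ} (hm : 2 ≤ m)

lemma sg_of_dvd1 {z : ℤ} (h : m ∣ z - a) : sg m a z = z + 1 := by simp [sg, h]

lemma not_dvd_both {z : ℤ} (hm : 2 ≤ m) (h : m ∣ z - a) : ¬ m ∣ z - a - 1 := by
  intro h2
  have : m ∣ 1 := by have := Int.dvd_sub h h2; simpa using this
  have := Int.le_of_dvd one_pos this; omega

lemma sg_of_dvd2 (hm : 2 ≤ m) {z : ℤ} (h : m ∣ z - a - 1) : sg m a z = z - 1 := by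
  have h1 : ¬ m ∣ z - a := fun hc => not_dvd_both hm hc h
  simp [sg, h1, h]

lemma sg_of_other {z : ℤ} (h1 : ¬ m ∣ z - a) (h2 : ¬ m ∣ z - a - 1) : sg m a z = z := by
  simp [sg, h1, h2]

lemma sg_invol (hm : 2 ≤ m) (z : ℤ) : sg m a (sg m a z) = z := by
  by_cases h1 : m ∣ z - a
  · rw [sg_of_dvd1 h1]
    have e : z + 1 - a - 1 = z - a := by ring
    rw [sg_of_dvd2 hm (by rw [e]; exact h1)]; ring
  · by_cases h2 : m ∣ z - a - 1
    · rw [sg_of_dvd2 hm h2]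
      have e : z - 1 - a = z - a - 1 := by ring
      rw [sg_of_dvd1 (by rw [e]; exact h2)]; ring
    · rw [sg_of_other h1 h2, sg_of_other h1 h2]

lemma sg_bounds (z : ℤ) : z - 1 ≤ sg m a z ∧ sg m a z ≤ z + 1 := by
  unfold sg; split_ifs <;> omega

lemma sg_sub_m (z : ℤ) : sg m a (z - m) = sg m a z - m := by
  have e1 : z - m - a = (z - a) - m := by ring
  have e2 : z - m - a - 1 = (z - a - 1) - m := by ring
  have d1 : m ∣ z - m - a ↔ m ∣ z - a := by
    rw [e1]; exact ⟨fun h => by simpa using dvd_add h (dvd_refl m), fun h => dvd_sub h (dvd_refl m)⟩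
  have d2 : m ∣ z - m - a - 1 ↔ m ∣ z - a - 1 := by
    rw [e2]; exact ⟨fun h => by simpa using dvd_add h (dvd_refl m), fun h => dvd_sub h (dvd_refl m)⟩
  unfold sg
  by_cases h1 : m ∣ z - a
  · simp [d1, h1]; ring
  · by_cases h2 : m ∣ z - a - 1
    · simp [d1, h1, d2, h2]; ring
    · simp [d1, h1, d2, h2]

lemma mem_SD {B : Set ℤ} {z : ℤ} : z ∈ SD m a B ↔ sg m a z ∈ B := Iff.rfl

lemma SD_SD (hm : 2 ≤ m) (B : Set ℤ) : SD m a (SD m a B) = B := by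
  ext z; simp only [SD, Set.mem_setOf_eq, sg_invol hm]

lemma sg_injective (hm : 2 ≤ m) : Function.Injective (sg m a) :=
  Function.LeftInverse.injective (g := sg m a) (sg_invol hm)

lemma SD_betaLike (hm : 2 ≤ m) {B : Set ℤ} (hB : BetaLike B) : BetaLike (SD m a B) := by
  obtain ⟨N, hN0, hlo, hhi⟩ := hB
  refine ⟨N + 1, by omega, fun z hz => ?_, fun z hz => ?_⟩
  · exact hlo _ (by have := (sg_bounds (m := m) (a := a) z).2; omega)
  · exact hhi _ (by have := (sg_bounds (m := m) (a := a) z).1; omega)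

lemma SD_core (hm : 2 ≤ m) {B : Set ℤ} (hB : CoreSet m B) : CoreSet m (SD m a B) := by
  intro z hz
  have : sg m a (z - m) = sg m a z - m := sg_sub_m _
  simp only [mem_SD] at hz ⊢
  rw [this]; exact hB _ hz

end SG

section FC
variable {B C D : Set ℤ}

lemma fin_inter_Ici (hB : BetaLike B) (x : ℤ) : (B ∩ Set.Ici x).Finite := by
  obtain ⟨N, hN0, hlo, hhi⟩ := hB
  apply Set.Finite.subset (Set.finite_Icc x N)
  rintro z ⟨hz1, hz2⟩
  exact ⟨hz2, by by_contra h; exact hhi z (by omega) hz1⟩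

lemma Fc_antitone (hB : BetaLike B) {x y : ℤ} (h : x ≤ y) : Fc B y ≤ Fc B x :=
  Set.ncard_le_ncard (Set.inter_subset_inter_right _ (Set.Ici_subset_Ici.mpr h)) (fin_inter_Ici hB x)

lemma Fc_succ_mem (hB : BetaLike B) {x : ℤ} (hx : x ∈ B) : Fc B x = Fc B (x + 1) + 1 := by
  have he : B ∩ Set.Ici x = insert x (B ∩ Set.Ici (x + 1)) := by
    ext z; simp only [Set.mem_inter_iff, Set.mem_Ici, Set.mem_insert_iff]
    constructor
    · rintro ⟨h1, h2⟩; rcases eq_or_lt_of_le h2 with h | h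
      · left; omega
      · right; exact ⟨h1, by omega⟩
    · rintro (rfl | ⟨h1, h2⟩); · exact ⟨hx, le_refl _⟩
      · exact ⟨h1, by omega⟩
  rw [Fc, he, Set.ncard_insert_of_notMem (by simp) (Set.Finite.subset (fin_inter_Ici hB x) (by intro z hz; exact ⟨hz.1, by have := hz.2; simp at this ⊢; omega⟩))]
  rfl

lemma Fc_succ_not_mem {x : ℤ} (hx : x ∉ B) : Fc B x = Fc B (x + 1) := by
  have he : B ∩ Set.Ici x = B ∩ Set.Ici (x + 1) := by
    ext z
    simp only [Set.mem_inter_iff, Set.mem_Ici]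
    constructor
    · rintro ⟨h1, h2⟩
      refine ⟨h1, ?_⟩
      rcases eq_or_lt_of_le h2 with h | h
      · exact absurd h1 (h ▸ hx)
      · omega
    · rintro ⟨h1, h2⟩; exact ⟨h1, by omega⟩
  rw [Fc, he]; rfl

lemma Fc_eq_zero (hB : BetaLike B) : ∃ N0 : ℤ, ∀ x, N0 ≤ x → Fc B x = 0 := by
  obtain ⟨N, hN0, hlo, hhi⟩ := hB
  refine ⟨N + 1, fun x hx => ?_⟩
  rw [Fc, Set.ncard_eq_zero (Set.Finite.subset (Set.finite_Icc x N) (by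
      rintro z ⟨h1, h2⟩
      exact ⟨h2, by by_contra h; exact hhi z (by omega) h1⟩))]
  · ext z; simp only [Set.mem_inter_iff, Set.mem_Ici, Set.mem_empty_iff_false, iff_false]
    rintro ⟨h1, h2⟩; exact hhi z (by omega) h1
  
lemma Fc_steps (hB : BetaLike B) {x x0 : ℤ} (h : x ≤ x0) (hsub : ∀ z, x ≤ z → z < x0 → z ∈ B) :
    Fc B x = Fc B x0 + (x0 - x).toNat := by
  obtain ⟨n, hn⟩ : ∃ n : ℕ, x0 - x = n := ⟨(x0 - x).toNat, by omega⟩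
  have : (x0 - x).toNat = n := by omega
  rw [this]; clear this
  induction n generalizing x with
  | zero => have : x = x0 := by omega
            subst this; simp
  | succ n ih =>
    have hx : x ∈ B := hsub x (le_refl _) (by omega)
    rw [Fc_succ_mem hB hx, ih (by omega) (fun z h1 h2 => hsub z (by omega) h2) (by omega)]
    ring

lemma Pk_finite {m : ℤ} (hm : 0 < m) (hB : BetaLike B) : (Pk m B).Finite := by
  obtain ⟨N, hN0, hlo, hhi⟩ := hB
  apply Set.Finite.subset ((Set.finite_Icc (-N - m) N).prod (Set.finite_Icc (-N - m) N))
  rintro ⟨b, c⟩ ⟨h1, h2, h3, h4⟩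
  have hb : b ≤ N := by by_contra h; exact hhi b (by omega) h1
  have hc : -N ≤ c := by by_contra h; exact h2 (hlo c (by omega))
  exact ⟨⟨by omega, hb⟩, ⟨by omega, by omega⟩⟩

end FC

section CORE
variable {m a : ℤ} {B C D : Set ℤ}

lemma down_closed (hm : 0 < m) (hc : CoreSet m B) {b c : ℤ} (hb : b ∈ B) (hd : m ∣ b - c)
    (hle : c ≤ b) : c ∈ B := by
  obtain ⟨q, hq⟩ := hd
  have hq0 : 0 ≤ q := by nlinarith
  obtain ⟨n, hn⟩ : ∃ n : ℕ, q = n := ⟨q.toNat, by omega⟩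
  subst hn
  have key : ∀ n : ℕ, ∀ b ∈ B, b - m * n ∈ B := by
    intro n
    induction n with
    | zero => intro b hb; simpa using hb
    | succ n ih =>
      intro b hb
      have h2 := ih (b - m) (hc b hb)
      have he : b - m - m * n = b - m * (n + 1) := by push_cast; ring
      rwa [he] at h2
  have h3 := key n b hb
  have he : b - m * n = c := by omega
  rwa [he] at h3

lemma sg_cases (hm : 2 ≤ m) (z : ℤ) :
    (m ∣ z - a ∧ sg m a z = z + 1) ∨ (m ∣ z - a - 1 ∧ sg m a z = z - 1) ∨
    (¬ m ∣ z - a ∧ ¬ m ∣ z - a - 1 ∧ sg m a z = z) := by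
  by_cases h1 : m ∣ z - a
  · exact Or.inl ⟨h1, sg_of_dvd1 h1⟩
  · by_cases h2 : m ∣ z - a - 1
    · exact Or.inr (Or.inl ⟨h2, sg_of_dvd2 hm h2⟩)
    · exact Or.inr (Or.inr ⟨h1, h2, sg_of_other h1 h2⟩)

/-- no-coexist: a removable corner on runner `a` forbids addable corners there. -/
lemma noadd_of_rem (hm : 0 < m) (hc : CoreSet m B) {y1 : ℤ} (h1 : m ∣ y1 - a) (h2 : y1 ∉ B)
    (h3 : y1 + 1 ∈ B) : ∀ y, m ∣ y - a → y ∈ B → y + 1 ∈ B := by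
  intro y hy hyB
  by_contra hy1
  rcases le_or_gt y y1 with h | h
  · have : y + 1 ∈ B := down_closed hm hc h3 (by
      have he : (y1 + 1) - (y + 1) = (y1 - a) - (y - a) := by ring
      rw [he]; exact dvd_sub h1 hy) (by omega)
    exact hy1 this
  · have : y1 ∈ B := down_closed hm hc hyB (by
      have he : y - y1 = (y - a) - (y1 - a) := by ring
      rw [he]; exact dvd_sub hy h1) (by omega)
    exact h2 this

lemma ite_sg_injOn (hm : 2 ≤ m) (x : ℤ) (S : Set ℤ) (hS : S ⊆ Set.Ici x) :
    Set.InjOn (fun w => if x ≤ sg m a w then sg m a w else w) S := by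
  intro w1 hw1 w2 hw2 he
  have hx1 : x ≤ w1 := hS hw1
  have hx2 : x ≤ w2 := hS hw2
  by_cases c1 : x ≤ sg m a w1 <;> by_cases c2 : x ≤ sg m a w2
  · simp only [if_pos c1, if_pos c2] at he
    exact sg_injective hm he
  · simp only [if_pos c1, if_neg c2] at he
    have h' : w1 = sg m a w2 := by rw [← he, sg_invol hm]
    have hb := (sg_bounds (m := m) (a := a) w2).1
    omega
  · simp only [if_neg c1, if_pos c2] at he
    have h' : w2 = sg m a w1 := by rw [he, sg_invol hm]
    have hb := (sg_bounds (m := m) (a := a) w1).1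
    omega
  · simpa only [if_neg c1, if_neg c2] using he

/-- `Dom (SD m a B) B` : lowering beads only decreases bead counts. -/
lemma dom_sg (hm : 2 ≤ m) (hB : BetaLike B)
    (hnoadd : ∀ y, m ∣ y - a → y ∈ B → y + 1 ∈ B) (x : ℤ) :
    Fc (SD m a B) x ≤ Fc B x := by
  refine Set.ncard_le_ncard_of_injOn (fun w => if x ≤ sg m a w then sg m a w else w)
    ?_ (ite_sg_injOn hm x _ (Set.inter_subset_right)) (fin_inter_Ici hB x)
  rintro w ⟨hw, hwx⟩
  have hwB : sg m a w ∈ B := hw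
  simp only [Set.mem_Ici] at hwx
  by_cases h : x ≤ sg m a w
  · simp only [if_pos h]; exact ⟨hwB, h⟩
  · simp only [if_neg h]
    push_neg at h
    rcases sg_cases (a := a) hm w with ⟨hd, he⟩ | ⟨hd, he⟩ | ⟨_, _, he⟩
    · omega
    · rw [he] at hwB
      have h4 : (w - 1) + 1 ∈ B := hnoadd (w - 1) (by
        have he2 : w - 1 - a = w - a - 1 := by ring
        rw [he2]; exact hd) hwB
      have h5 : w ∈ B := by
        have he3 : w - 1 + 1 = w := by ring
        rwa [he3] at h4
      exact ⟨h5, hwx⟩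
    · omega

lemma Fc_le_SD_of_not_drop (hm : 2 ≤ m) (hB : BetaLike B) {x : ℤ}
    (hnd : ¬(x ∈ B ∧ x - 1 ∉ B ∧ m ∣ x - 1 - a)) :
    Fc B x ≤ Fc (SD m a B) x := by
  refine Set.ncard_le_ncard_of_injOn (fun w => if x ≤ sg m a w then sg m a w else w)
    ?_ (ite_sg_injOn hm x _ (Set.inter_subset_right)) (fin_inter_Ici (SD_betaLike hm hB) x)
  rintro w ⟨hw, hwx⟩
  simp only [Set.mem_Ici] at hwx
  by_cases h : x ≤ sg m a w
  · simp only [if_pos h]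
    refine ⟨?_, h⟩
    show sg m a (sg m a w) ∈ B
    rwa [sg_invol hm]
  · simp only [if_neg h]
    push_neg at h
    rcases sg_cases (a := a) hm w with ⟨hd, he⟩ | ⟨hd, he⟩ | ⟨_, _, he⟩
    · omega
    · have hwx' : w = x := by omega
      subst hwx'
      have hdd : m ∣ w - 1 - a := by
        have he2 : w - 1 - a = w - a - 1 := by ring
        rw [he2]; exact hd
      have hx1 : w - 1 ∈ B := by
        by_contra hno
        exact hnd ⟨hw, hno, hdd⟩
      refine ⟨?_, Set.self_mem_Ici⟩
      show sg m a w ∈ B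
      rwa [he]
    · omega

lemma Fc_SD_drop (hm : 2 ≤ m) (hB : BetaLike B) {x : ℤ}
    (h1 : x ∈ B) (h2 : x - 1 ∉ B) (h3 : m ∣ x - 1 - a) :
    Fc (SD m a B) x + 1 = Fc B x := by
  have hd : m ∣ x - a - 1 := by
    have he : x - a - 1 = x - 1 - a := by ring
    rw [he]; exact h3
  have hsgx : sg m a x = x - 1 := sg_of_dvd2 hm hd
  have hsgx1 : sg m a (x - 1) = x := by
    rw [sg_of_dvd1 h3]; ring
  have hfinB := fin_inter_Ici hB x
  have hfinS := fin_inter_Ici (SD_betaLike (a := a) hm hB) x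
  have hle1 : Fc (SD m a B) x ≤ ((B ∩ Set.Ici x) \ {x}).ncard := by
    refine Set.ncard_le_ncard_of_injOn (sg m a) ?_
      (fun w1 _ w2 _ h => sg_injective hm h) (hfinB.subset Set.diff_subset)
    rintro w ⟨hw, hwx⟩
    have hwB : sg m a w ∈ B := hw
    simp only [Set.mem_Ici] at hwx
    have hb := (sg_bounds (m := m) (a := a) w).1
    have hne1 : sg m a w ≠ x - 1 := by
      intro hcon
      have hwx2 : w = x := by rw [← sg_invol hm (a := a) (z := w), hcon, hsgx1]
      subst hwx2
      rw [hsgx] at hwB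
      exact h2 hwB
    have hne2 : sg m a w ≠ x := by
      intro hcon
      have hwx2 : w = x - 1 := by rw [← sg_invol hm (a := a) (z := w), hcon, hsgx]
      omega
    exact ⟨⟨hwB, by simp only [Set.mem_Ici]; omega⟩, by simpa using hne2⟩
  have hle2 : ((B ∩ Set.Ici x) \ {x}).ncard ≤ Fc (SD m a B) x := by
    refine Set.ncard_le_ncard_of_injOn (sg m a) ?_
      (fun w1 _ w2 _ h => sg_injective hm h) hfinS
    rintro w ⟨⟨hw, hwx⟩, hwne⟩
    simp only [Set.mem_Ici] at hwx
    simp only [Set.mem_singleton_iff] at hwne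
    have hb := (sg_bounds (m := m) (a := a) w).1
    refine ⟨?_, ?_⟩
    · show sg m a (sg m a w) ∈ B
      rwa [sg_invol hm]
    · simp only [Set.mem_Ici]
      have hne : sg m a w ≠ x - 1 := by
        intro hcon
        have hwx2 : w = x := by rw [← sg_invol hm (a := a) (z := w), hcon, hsgx1]
        exact hwne hwx2
      omega
  have hxmem : x ∈ B ∩ Set.Ici x := ⟨h1, Set.self_mem_Ici⟩
  have hdiff := Set.ncard_diff_singleton_add_one hxmem hfinB
  have hFc : Fc B x = (B ∩ Set.Ici x).ncard := rfl
  omega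

end CORE


section DOMLIFT
variable {m a : ℤ} {B C D : Set ℤ}

/-- at points `x ≡ a (mod m)`, `sg` preserves `Ici x`, so `Fc` is unchanged. -/
lemma Fc_SD_eq_of_dvd (hm : 2 ≤ m) (hB : BetaLike B) {x : ℤ} (hx : m ∣ x - a) :
    Fc (SD m a B) x = Fc B x := by
  have hsg_Ici : ∀ z, x ≤ z → x ≤ sg m a z := by
    intro z hz
    have hb := (sg_bounds (m := m) (a := a) z).1
    rcases eq_or_lt_of_le hz with h | h
    · subst h; rw [sg_of_dvd1 hx]; omega
    · omega
  apply le_antisymm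
  · refine Set.ncard_le_ncard_of_injOn (sg m a) ?_
      (fun w1 _ w2 _ h => sg_injective hm h) (fin_inter_Ici hB x)
    rintro w ⟨hw, hwx⟩
    exact ⟨hw, hsg_Ici w hwx⟩
  · refine Set.ncard_le_ncard_of_injOn (sg m a) ?_
      (fun w1 _ w2 _ h => sg_injective hm h) (fin_inter_Ici (SD_betaLike hm hB) x)
    rintro w ⟨hw, hwx⟩
    refine ⟨?_, hsg_Ici w hwx⟩
    show sg m a (sg m a w) ∈ B
    rwa [sg_invol hm]

lemma eqBelow_SD (hm : 2 ≤ m) (hB : BetaLike B) :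
    ∃ M : ℤ, ∀ x, x ≤ M → Fc (SD m a B) x = Fc B x := by
  obtain ⟨N, hN0, hlo, hhi⟩ := hB
  refine ⟨-N - 2 - m, fun x hx => ?_⟩
  -- choose x0 ∈ [x, x+m) with m ∣ x0 - a
  set x0 := x + (a - x) % m with hx0
  have hmpos : (0 : ℤ) < m := by omega
  have hr1 : 0 ≤ (a - x) % m := Int.emod_nonneg _ (by omega)
  have hr2 : (a - x) % m < m := Int.emod_lt_of_pos _ hmpos
  have hdvd : m ∣ x0 - a := by
    have : x0 - a = -(m * ((a - x) / m)) := by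
      have := Int.mul_ediv_add_emod (a - x) m
      omega
    rw [this]
    exact dvd_neg.mpr ⟨(a - x) / m, rfl⟩
  have hx0le : x ≤ x0 := by omega
  have hx0hi : x0 ≤ -N - 2 := by omega
  have hs1 : Fc B x = Fc B x0 + (x0 - x).toNat :=
    Fc_steps ⟨N, hN0, hlo, hhi⟩ hx0le (fun z h1 h2 => hlo z (by omega))
  have hSB : BetaLike (SD m a B) := SD_betaLike hm ⟨N, hN0, hlo, hhi⟩
  have hs2 : Fc (SD m a B) x = Fc (SD m a B) x0 + (x0 - x).toNat := by
    obtain ⟨N', hN0', hlo', hhi'⟩ := hSB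
    refine Fc_steps ⟨N', hN0', hlo', hhi'⟩ hx0le (fun z h1 h2 => ?_)
    show sg m a z ∈ B
    have hb := (sg_bounds (m := m) (a := a) z).2
    exact hlo _ (by omega)
  rw [hs1, hs2, Fc_SD_eq_of_dvd hm ⟨N, hN0, hlo, hhi⟩ hdvd]

/-- if `D` has no removable corner at all, then `Dom`+`EqBelow` forces `C = D`. -/
lemma eq_of_no_corner (hC : BetaLike C) (hD : BetaLike D)
    (hdc : ∀ z ∈ D, z - 1 ∈ D) (hdom : Dom C D) (heqb : EqBelow C D) : C = D := by
  have hDdown : ∀ z ∈ D, ∀ w, w ≤ z → w ∈ D := by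
    intro z hz w hw
    obtain ⟨n, hn⟩ : ∃ n : ℕ, z - w = n := ⟨(z - w).toNat, by omega⟩
    clear hw
    induction n generalizing z w with
    | zero => have : w = z := by omega
              subst this; exact hz
    | succ n ih =>
      have h1 : z - 1 ∈ D := hdc z hz
      exact ih _ h1 w (by omega)
  have hsub : C ⊆ D := by
    intro z hz
    by_contra hzD
    have hFD : Fc D z = 0 := by
      rw [Fc, Set.ncard_eq_zero (fin_inter_Ici hD z)]
      ext w
      simp only [Set.mem_inter_iff, Set.mem_Ici, Set.mem_empty_iff_false, iff_false]
      rintro ⟨h1, h2⟩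
      exact hzD (hDdown w h1 z h2)
    have hFC : 1 ≤ Fc C z := by
      rw [Fc]
      have : z ∈ C ∩ Set.Ici z := ⟨hz, Set.self_mem_Ici⟩
      have hpos := Set.ncard_pos (fin_inter_Ici hC z)
      exact hpos.mpr ⟨z, this⟩
    have := hdom z
    omega
  -- now D ⊆ C by counting
  have hsup : D ⊆ C := by
    intro z hz
    by_contra hzC
    obtain ⟨M, hM⟩ := heqb
    set x := min M z with hx
    have h1 : Fc C x = Fc D x := hM x (min_le_left _ _)
    have hzmem : z ∈ D ∩ Set.Ici x := ⟨hz, by simp [hx]⟩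
    have h2 : ((D ∩ Set.Ici x) \ {z}).ncard + 1 = Fc D x :=
      Set.ncard_diff_singleton_add_one hzmem (fin_inter_Ici hD x)
    have h3 : Fc C x ≤ ((D ∩ Set.Ici x) \ {z}).ncard := by
      apply Set.ncard_le_ncard _ ((fin_inter_Ici hD x).subset Set.diff_subset)
      rintro w ⟨hw, hwx⟩
      refine ⟨⟨hsub hw, hwx⟩, ?_⟩
      simp only [Set.mem_singleton_iff]
      rintro rfl
      exact hzC hw
    omega
  exact Set.Subset.antisymm hsub hsup

/-- lifting, case (i): if `C` has no removable `a`-corner then `Dom C D` descends to `σD`. -/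
lemma dom_C_SD (hm : 2 ≤ m) (hC : BetaLike C) (hD : BetaLike D)
    (hnoaddD : ∀ y, m ∣ y - a → y ∈ D → y + 1 ∈ D)
    (hnorem : ∀ y, m ∣ y - a → y + 1 ∈ C → y ∈ C)
    (hdom : Dom C D) : Dom C (SD m a D) := by
  intro x
  by_cases hdrop : x ∈ D ∧ x - 1 ∉ D ∧ m ∣ x - 1 - a
  · obtain ⟨hd1, hd2, hd3⟩ := hdrop
    have hkey : Fc (SD m a D) x + 1 = Fc D x := Fc_SD_drop hm hD hd1 hd2 hd3
    by_cases hc1 : x - 1 ∈ C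
    · have e1 : Fc C (x - 1) = Fc C x + 1 := by
        have := Fc_succ_mem hC hc1
        have he : x - 1 + 1 = x := by ring
        rwa [he] at this
      have e2 : Fc D (x - 1) = Fc D x := by
        have := Fc_succ_not_mem (B := D) hd2
        have he : x - 1 + 1 = x := by ring
        rwa [he] at this
      have := hdom (x - 1)
      omega
    · have hc0 : x ∉ C := fun hxc => hc1 (hnorem (x - 1) hd3 (by
        have he : x - 1 + 1 = x := by ring
        rwa [he])) 
      have e1 : Fc C x = Fc C (x + 1) := Fc_succ_not_mem hc0
      have e2 : Fc D x = Fc D (x + 1) + 1 := Fc_succ_mem hD hd1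
      have := hdom (x + 1)
      omega
  · exact le_trans (hdom x) (Fc_le_SD_of_not_drop hm hD hdrop)

/-- lifting, case (ii): `Dom C D` descends to `Dom σC σD`. -/
lemma dom_SD_SD (hm : 2 ≤ m) (hC : BetaLike C) (hD : BetaLike D)
    (hnoaddC : ∀ y, m ∣ y - a → y ∈ C → y + 1 ∈ C)
    (hnoaddD : ∀ y, m ∣ y - a → y ∈ D → y + 1 ∈ D)
    (hdom : Dom C D) : Dom (SD m a C) (SD m a D) := by
  intro x
  by_cases hdrop : x ∈ D ∧ x - 1 ∉ D ∧ m ∣ x - 1 - a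
  · obtain ⟨hd1, hd2, hd3⟩ := hdrop
    have hkey : Fc (SD m a D) x + 1 = Fc D x := Fc_SD_drop hm hD hd1 hd2 hd3
    have hCle : Fc (SD m a C) x ≤ Fc C x := dom_sg hm hC hnoaddC x
    rcases lt_or_eq_of_le (hdom x) with h | h
    · omega
    · by_cases hc1 : x - 1 ∈ C
      · exfalso
        have e1 : Fc C (x - 1) = Fc C x + 1 := by
          have := Fc_succ_mem hC hc1
          have he : x - 1 + 1 = x := by ring
          rwa [he] at this
        have e2 : Fc D (x - 1) = Fc D x := by
          have := Fc_succ_not_mem (B := D) hd2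
          have he : x - 1 + 1 = x := by ring
          rwa [he] at this
        have := hdom (x - 1)
        omega
      · by_cases hc0 : x ∈ C
        · have hkeyC : Fc (SD m a C) x + 1 = Fc C x := Fc_SD_drop hm hC hc0 hc1 hd3
          omega
        · exfalso
          have e1 : Fc C x = Fc C (x + 1) := Fc_succ_not_mem hc0
          have e2 : Fc D x = Fc D (x + 1) + 1 := Fc_succ_mem hD hd1
          have := hdom (x + 1)
          omega
  · exact le_trans (le_trans (dom_sg hm hC hnoaddC x) (hdom x))
      (Fc_le_SD_of_not_drop hm hD hdrop)

end DOMLIFT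

section KEY
variable {m a : ℤ} {B : Set ℤ}

lemma dvd_small_zero {t : ℤ} (hm : 0 < m) (hd : m ∣ t) (h0 : 0 ≤ t) (h1 : t < m) : t = 0 := by
  obtain ⟨q, rfl⟩ := hd
  rcases lt_trichotomy q 0 with h | h | h
  · nlinarith
  · simp [h]
  · nlinarith

/-- the two "inner" maps for the key bijection. -/
noncomputable def keyphi (m a : ℤ) (q : ℤ × ℤ) : ℤ × ℤ :=
  if m ∣ q.1 - a then (q.1 + 1, q.2)
  else if m ∣ q.1 - a - 1 then (if m ∣ q.2 - a then (q.1 - 1, q.1 - m) else (q.1 - 1, q.2))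
  else if m ∣ q.2 - a then (q.1, q.2 + 1)
  else if m ∣ q.2 - a - 1 then (q.1, q.2 - 1)
  else q

noncomputable def keypsi (m a : ℤ) (q : ℤ × ℤ) : ℤ × ℤ :=
  if m ∣ q.1 - a then (if m ∣ q.2 - a - 1 then (q.1 + 1, q.1) else (q.1 + 1, q.2))
  else if m ∣ q.1 - a - 1 then (q.1 - 1, q.2)
  else if m ∣ q.2 - a then (q.1, q.2 + 1)
  else if m ∣ q.2 - a - 1 then (q.1, q.2 - 1)
  else q

lemma key_count (hm : 2 ≤ m) (hB : BetaLike B) (hcore : CoreSet m B)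
    {y0 : ℤ} (hy0 : m ∣ y0 - a) (hy0nB : y0 ∉ B) (hy0B1 : y0 + 1 ∈ B) :
    (Pk m (SD m a B)).ncard + 1 = (Pk m B).ncard := by
  classical
  have hmpos : (0 : ℤ) < m := by omega
  have hnoadd : ∀ y, m ∣ y - a → y ∈ B → y + 1 ∈ B := noadd_of_rem hmpos hcore hy0 hy0nB hy0B1
  -- least non-element of runner a
  obtain ⟨N, hN0, hlo, hhi⟩ := hB
  have hBL : BetaLike B := ⟨N, hN0, hlo, hhi⟩
  obtain ⟨cs, ⟨hcs_dvd, hcs_nB⟩, hcs_min⟩ :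
      ∃ cs, (m ∣ cs - a ∧ cs ∉ B) ∧ ∀ z, (m ∣ z - a ∧ z ∉ B) → cs ≤ z := by
    refine Int.exists_least_of_bdd ⟨-N, ?_⟩ ⟨y0, ⟨hy0, hy0nB⟩⟩
    rintro z ⟨_, hz⟩
    by_contra h
    exact hz (hlo z (by omega))
  have hcs_m : cs - m ∈ B := by
    by_contra h
    have := hcs_min (cs - m) ⟨by
      have he : cs - m - a = (cs - a) - m := by ring
      rw [he]; exact dvd_sub hcs_dvd (dvd_refl m), h⟩
    omega
  have hcs_1 : cs + 1 ∈ B := by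
    have hle : cs ≤ y0 := hcs_min y0 ⟨hy0, hy0nB⟩
    exact down_closed hmpos hcore hy0B1 (by
      have he : (y0 + 1) - (cs + 1) = (y0 - a) - (cs - a) := by ring
      rw [he]; exact dvd_sub hy0 hcs_dvd) (by omega)
  have hcs_uni : ∀ c, m ∣ c - a → c ∉ B → c - m ∈ B → c = cs := by
    intro c h1 h2 h3
    have hle : cs ≤ c := hcs_min c ⟨h1, h2⟩
    rcases eq_or_lt_of_le hle with h | h
    · omega
    · exfalso
      have hdvd2 : m ∣ c - cs := by
        have he : c - cs = (c - a) - (cs - a) := by ring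
        rw [he]; exact dvd_sub h1 hcs_dvd
      have hge : m ≤ c - cs := Int.le_of_dvd (by omega) hdvd2
      have : cs ∈ B := down_closed hmpos hcore h3 (by
        have he : (c - m) - cs = (c - cs) - m := by ring
        rw [he]; exact dvd_sub hdvd2 (dvd_refl m)) (by omega)
      exact hcs_nB this
  set star : ℤ × ℤ := (cs + 1, cs) with hstar
  have hstar_mem : star ∈ Pk m B := by
    refine ⟨hcs_1, hcs_nB, ?_, ?_⟩
    · show cs < cs + 1; omega
    · show cs + 1 < cs + m; omega
  -- membership in σB
  have hmemSD : ∀ z, z ∈ SD m a B ↔ sg m a z ∈ B := fun z => Iff.rfl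
  -- forced-difference helpers
  have forced1 : ∀ b c : ℤ, m ∣ b - a - 1 → m ∣ c - a → c < b → b < c + m → c = b - 1 := by
    intro b c h1 h2 h3 h4
    have hd : m ∣ b - c - 1 := by
      have he : b - c - 1 = (b - a - 1) - (c - a) := by ring
      rw [he]; exact dvd_sub h1 h2
    have := dvd_small_zero hmpos hd (by omega) (by omega)
    omega
  have forced2 : ∀ b c : ℤ, m ∣ b - a → m ∣ c - a - 1 → c < b → b < c + m → c = b + 1 - m := by
    intro b c h1 h2 h3 h4
    have hd : m ∣ b - c + 1 := by
      have he : b - c + 1 = (b - a) - (c - a - 1) := by ring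
      rw [he]; exact dvd_sub h1 h2
    have h5 : b - c + 1 = m := by
      have hd2 : m ∣ m - (b - c + 1) := dvd_sub (dvd_refl m) hd
      have := dvd_small_zero hmpos hd2 (by omega) (by omega)
      omega
    omega
  have notsame : ∀ b c : ℤ, m ∣ b - a → m ∣ c - a → c < b → b < c + m → False := by
    intro b c h1 h2 h3 h4
    have hd : m ∣ b - c := by
      have he : b - c = (b - a) - (c - a) := by ring
      rw [he]; exact dvd_sub h1 h2
    have := Int.le_of_dvd (by omega) hd
    omega
  have notsame2 : ∀ b c : ℤ, m ∣ b - a - 1 → m ∣ c - a - 1 → c < b → b < c + m → False := by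
    intro b c h1 h2 h3 h4
    have hd : m ∣ b - c := by
      have he : b - c = (b - a - 1) - (c - a - 1) := by ring
      rw [he]; exact dvd_sub h1 h2
    have := Int.le_of_dvd (by omega) hd
    omega
  -- abbreviation
  set S := SD m a B with hSdef
  have hmemS : ∀ z : ℤ, z ∈ S ↔ sg m a z ∈ B := fun z => Iff.rfl
  have ND1 : ∀ z : ℤ, m ∣ z - a → ¬ m ∣ z - a - 1 := fun z hz => not_dvd_both hm hz
  have ND2 : ∀ z : ℤ, m ∣ z - a - 1 → ¬ m ∣ z - a := fun z h1 h2 => not_dvd_both hm h2 h1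
  -- ψ : P(σB) → P(B) \ {star}, with φ a left inverse
  have hpsi_full : ∀ q ∈ Pk m S, keypsi m a q ∈ (Pk m B) \ {star} ∧
      keyphi m a (keypsi m a q) = q := by
    rintro ⟨b, c⟩ ⟨hb, hc, h3, h4⟩
    have hbB : sg m a b ∈ B := hb
    have hcB : sg m a c ∉ B := hc
    simp only at h3 h4
    by_cases db1 : m ∣ b - a
    · have hsgb : sg m a b = b + 1 := sg_of_dvd1 db1
      rw [hsgb] at hbB
      by_cases dc1 : m ∣ c - a
      · exact absurd (notsame b c db1 dc1 h3 h4) (fun h => h)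
      · by_cases dc2 : m ∣ c - a - 1
        · -- zone (A, B1) : forced c = b + 1 - m ; ψ = (b+1, b)
          have hcf : c = b + 1 - m := forced2 b c db1 dc2 h3 h4
          have hsgc : sg m a c = c - 1 := sg_of_dvd2 hm dc2
          rw [hsgc] at hcB
          have hbmB : b - m ∉ B := by
            have he : c - 1 = b - m := by omega
            rwa [he] at hcB
          have hbnB : b ∉ B := fun hmem => hbmB (hcore b hmem)
          have hv : keypsi m a (b, c) = (b + 1, b) := by
            simp [keypsi, db1, dc2]
          have hd1' : ¬ m ∣ b + 1 - a := by
            intro hcon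
            have : m ∣ 1 := by
              have he : (1 : ℤ) = (b + 1 - a) - (b - a) := by ring
              rw [he]; exact dvd_sub hcon db1
            have := Int.le_of_dvd one_pos this; omega
          have hd2' : m ∣ b + 1 - a - 1 := by
            have he : b + 1 - a - 1 = b - a := by ring
            rw [he]; exact db1
          have hv2 : keyphi m a (b + 1, b) = (b, b + 1 - m) := by
            simp [keyphi, hd1', hd2', db1]
          rw [hv]
          refine ⟨⟨⟨hbB, hbnB, by show b < b + 1; omega, by show b + 1 < b + m; omega⟩, ?_⟩, ?_⟩
          · simp only [Set.mem_singleton_iff, hstar, Prod.mk.injEq]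
            rintro ⟨e1, e2⟩
            rw [e2] at hbmB
            exact hbmB hcs_m
          · rw [hv2, hcf]
        · -- zone (A, O) : ψ = (b+1, c)
          have hsgc : sg m a c = c := sg_of_other dc1 dc2
          rw [hsgc] at hcB
          have hnm : c ≠ b + 1 - m := by
            intro he
            apply dc2
            have he2 : c - a - 1 = (b - a) - m := by omega
            rw [he2]; exact dvd_sub db1 (dvd_refl m)
          have hv : keypsi m a (b, c) = (b + 1, c) := by
            simp [keypsi, db1, dc2]
          have hd1' : ¬ m ∣ b + 1 - a := by
            intro hcon
            have h1 : m ∣ 1 := by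
              have he : (1 : ℤ) = (b + 1 - a) - (b - a) := by ring
              rw [he]; exact dvd_sub hcon db1
            have := Int.le_of_dvd one_pos h1; omega
          have hd2' : m ∣ b + 1 - a - 1 := by
            have he : b + 1 - a - 1 = b - a := by ring
            rw [he]; exact db1
          have hv2 : keyphi m a (b + 1, c) = (b, c) := by
            simp [keyphi, hd1', hd2', dc1]
          rw [hv]
          refine ⟨⟨⟨hbB, hcB, by show c < b + 1; omega, by show b + 1 < c + m; omega⟩, ?_⟩, ?_⟩
          · simp only [Set.mem_singleton_iff, hstar, Prod.mk.injEq]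
            rintro ⟨e1, e2⟩
            exact dc1 (e2 ▸ hcs_dvd)
          · rw [hv2]
    · by_cases db2 : m ∣ b - a - 1
      · have hsgb : sg m a b = b - 1 := sg_of_dvd2 hm db2
        rw [hsgb] at hbB
        by_cases dc1 : m ∣ c - a
        · -- zone (B1, A) : impossible
          exfalso
          have hcf : c = b - 1 := forced1 b c db2 dc1 h3 h4
          have hsgc : sg m a c = c + 1 := sg_of_dvd1 dc1
          rw [hsgc] at hcB
          have hbnB : b ∉ B := by
            have he : c + 1 = b := by omega
            rwa [he] at hcB
          have hd : m ∣ (b - 1) - a := by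
            have he : b - 1 - a = b - a - 1 := by ring
            rw [he]; exact db2
          have := hnoadd (b - 1) hd hbB
          have he : b - 1 + 1 = b := by ring
          rw [he] at this
          exact hbnB this
        · by_cases dc2 : m ∣ c - a - 1
          · exact absurd (notsame2 b c db2 dc2 h3 h4) (fun h => h)
          · -- zone (B1, O) : ψ = (b-1, c)
            have hsgc : sg m a c = c := sg_of_other dc1 dc2
            rw [hsgc] at hcB
            have hne1 : c ≠ b - 1 := by
              intro he
              apply dc1
              have he2 : c - a = b - a - 1 := by omega
              rw [he2]; exact db2
            have hv : keypsi m a (b, c) = (b - 1, c) := by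
              simp [keypsi, db1, db2]
            have hd1' : m ∣ b - 1 - a := by
              have he : b - 1 - a = b - a - 1 := by ring
              rw [he]; exact db2
            have hv2 : keyphi m a (b - 1, c) = (b, c) := by
              simp [keyphi, hd1']
            rw [hv]
            refine ⟨⟨⟨hbB, hcB, by show c < b - 1; omega, by show b - 1 < c + m; omega⟩, ?_⟩, ?_⟩
            · simp only [Set.mem_singleton_iff, hstar, Prod.mk.injEq]
              rintro ⟨e1, e2⟩
              apply ND1 (b - 1) hd1'
              have he : b - 1 - a - 1 = cs - a := by omega
              rw [he]; exact hcs_dvd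
            · rw [hv2]
      · -- b is "other"
        have hsgb : sg m a b = b := sg_of_other db1 db2
        rw [hsgb] at hbB
        by_cases dc1 : m ∣ c - a
        · -- zone (O, A) : ψ = (b, c+1)
          have hsgc : sg m a c = c + 1 := sg_of_dvd1 dc1
          rw [hsgc] at hcB
          have hne1 : b ≠ c + 1 := by
            intro he
            apply db2
            have he2 : b - a - 1 = c - a := by omega
            rw [he2]; exact dc1
          have hd1' : ¬ m ∣ c + 1 - a := by
            intro hcon
            have h1 : m ∣ 1 := by
              have he : (1 : ℤ) = (c + 1 - a) - (c - a) := by ring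
              rw [he]; exact dvd_sub hcon dc1
            have := Int.le_of_dvd one_pos h1; omega
          have hd2' : m ∣ c + 1 - a - 1 := by
            have he : c + 1 - a - 1 = c - a := by ring
            rw [he]; exact dc1
          have hv : keypsi m a (b, c) = (b, c + 1) := by
            simp [keypsi, db1, db2, dc1]
          have hv2 : keyphi m a (b, c + 1) = (b, c) := by
            simp [keyphi, db1, db2, hd1', hd2']
          rw [hv]
          refine ⟨⟨⟨hbB, hcB, by show c + 1 < b; omega, by show b < c + 1 + m; omega⟩, ?_⟩, ?_⟩
          · simp only [Set.mem_singleton_iff, hstar, Prod.mk.injEq]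
            rintro ⟨e1, e2⟩
            apply db2
            have he : b - a - 1 = cs - a := by omega
            rw [he]; exact hcs_dvd
          · rw [hv2]
        · by_cases dc2 : m ∣ c - a - 1
          · -- zone (O, B1) : ψ = (b, c-1)
            have hsgc : sg m a c = c - 1 := sg_of_dvd2 hm dc2
            rw [hsgc] at hcB
            have hne1 : b ≠ c - 1 + m := by
              intro he
              apply db1
              have he2 : b - a = (c - a - 1) + m := by omega
              rw [he2]; exact dvd_add dc2 (dvd_refl m)
            have hd1' : m ∣ c - 1 - a := by
              have he : c - 1 - a = c - a - 1 := by ring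
              rw [he]; exact dc2
            have hv : keypsi m a (b, c) = (b, c - 1) := by
              simp [keypsi, db1, db2, dc1, dc2]
            have hv2 : keyphi m a (b, c - 1) = (b, c) := by
              simp [keyphi, db1, db2, hd1']
            rw [hv]
            refine ⟨⟨⟨hbB, hcB, by show c - 1 < b; omega, by show b < c - 1 + m; omega⟩, ?_⟩, ?_⟩
            · simp only [Set.mem_singleton_iff, hstar, Prod.mk.injEq]
              rintro ⟨e1, e2⟩
              apply db2
              have he : b - a - 1 = cs - a := by omega
              rw [he]; exact hcs_dvd
            · rw [hv2]
          · -- zone (O, O) : identity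
            have hsgc : sg m a c = c := sg_of_other dc1 dc2
            rw [hsgc] at hcB
            have hv : keypsi m a (b, c) = (b, c) := by
              simp [keypsi, db1, db2, dc1, dc2]
            have hv2 : keyphi m a (b, c) = (b, c) := by
              simp [keyphi, db1, db2, dc1, dc2]
            rw [hv]
            refine ⟨⟨⟨hbB, hcB, by show c < b; omega, by show b < c + m; omega⟩, ?_⟩, ?_⟩
            · simp only [Set.mem_singleton_iff, hstar, Prod.mk.injEq]
              rintro ⟨e1, e2⟩
              apply db2
              have he : b - a - 1 = cs - a := by omega
              rw [he]; exact hcs_dvd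
            · rw [hv2]
  -- φ : P(B) \ {star} → P(σB), with ψ a left inverse
  have hphi_full : ∀ q ∈ (Pk m B) \ {star}, keyphi m a q ∈ Pk m S ∧
      keypsi m a (keyphi m a q) = q := by
    rintro ⟨b, c⟩ ⟨⟨hb, hc, h3, h4⟩, hns⟩
    simp only [Set.mem_singleton_iff, hstar, Prod.mk.injEq, not_and] at hns
    simp only at h3 h4 hb hc
    by_cases db1 : m ∣ b - a
    · by_cases dc1 : m ∣ c - a
      · exact absurd (notsame b c db1 dc1 h3 h4) (fun h => h)
      · by_cases dc2 : m ∣ c - a - 1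
        · -- zone (A, B1) : impossible in P(B)
          exfalso
          have hcf : c = b + 1 - m := forced2 b c db1 dc2 h3 h4
          have hb1 : b + 1 ∈ B := hnoadd b db1 hb
          have : c ∈ B := down_closed hmpos hcore hb1 (by
            have he : (b + 1) - c = m := by omega
            rw [he]) (by omega)
          exact hc this
        · -- zone (A, O) : φ = (b+1, c)
          have hd1' : ¬ m ∣ b + 1 - a := by
            intro hcon
            have h1 : m ∣ 1 := by
              have he : (1 : ℤ) = (b + 1 - a) - (b - a) := by ring
              rw [he]; exact dvd_sub hcon db1
            have := Int.le_of_dvd one_pos h1; omega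
          have hd2' : m ∣ b + 1 - a - 1 := by
            have he : b + 1 - a - 1 = b - a := by ring
            rw [he]; exact db1
          have hnm : c ≠ b + 1 - m := by
            intro he
            apply dc2
            have he2 : c - a - 1 = (b - a) - m := by omega
            rw [he2]; exact dvd_sub db1 (dvd_refl m)
          have hv : keyphi m a (b, c) = (b + 1, c) := by
            simp [keyphi, db1]
          have hv2 : keypsi m a (b + 1, c) = (b, c) := by
            simp [keypsi, hd1', hd2']
          rw [hv]
          refine ⟨⟨?_, ?_, by show c < b + 1; omega, by show b + 1 < c + m; omega⟩, hv2⟩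
          · show sg m a (b + 1) ∈ B
            rw [sg_of_dvd2 hm hd2']
            have he : b + 1 - 1 = b := by ring
            rwa [he]
          · show sg m a c ∉ B
            rwa [sg_of_other dc1 dc2]
    · by_cases db2 : m ∣ b - a - 1
      · have hd1' : m ∣ b - 1 - a := by
          have he : b - 1 - a = b - a - 1 := by ring
          rw [he]; exact db2
        by_cases dc1 : m ∣ c - a
        · -- zone (B1, A) : φ = (b-1, b-m)
          have hcf : c = b - 1 := forced1 b c db2 dc1 h3 h4
          have hcmB : c - m ∉ B := by
            intro hmem
            have := hcs_uni c dc1 hc hmem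
            exact (hns (by omega)) (by omega)
          have hdbm : m ∣ b - m - a - 1 := by
            have he : b - m - a - 1 = (b - a - 1) - m := by ring
            rw [he]; exact dvd_sub db2 (dvd_refl m)
          have hv : keyphi m a (b, c) = (b - 1, b - m) := by
            simp [keyphi, db1, db2, dc1]
          have hv2 : keypsi m a (b - 1, b - m) = (b, c) := by
            have e2 : m ∣ b - m - a - 1 := hdbm
            simp [keypsi, hd1', e2, hcf]
          rw [hv]
          refine ⟨⟨?_, ?_, by show b - m < b - 1; omega, by show b - 1 < b - m + m; omega⟩, hv2⟩
          · show sg m a (b - 1) ∈ B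
            rw [sg_of_dvd1 hd1']
            have he : b - 1 + 1 = b := by ring
            rwa [he]
          · show sg m a (b - m) ∉ B
            rw [sg_of_dvd2 hm hdbm]
            have he : b - m - 1 = c - m := by omega
            rwa [he]
        · by_cases dc2 : m ∣ c - a - 1
          · exact absurd (notsame2 b c db2 dc2 h3 h4) (fun h => h)
          · -- zone (B1, O) : φ = (b-1, c)
            have hne1 : c ≠ b - 1 := by
              intro he
              apply dc1
              have he2 : c - a = b - a - 1 := by omega
              rw [he2]; exact db2
            have hv : keyphi m a (b, c) = (b - 1, c) := by
              simp [keyphi, db1, db2, dc1]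
            have hv2 : keypsi m a (b - 1, c) = (b, c) := by
              simp [keypsi, hd1', dc2]
            rw [hv]
            refine ⟨⟨?_, ?_, by show c < b - 1; omega, by show b - 1 < c + m; omega⟩, hv2⟩
            · show sg m a (b - 1) ∈ B
              rw [sg_of_dvd1 hd1']
              have he : b - 1 + 1 = b := by ring
              rwa [he]
            · show sg m a c ∉ B
              rwa [sg_of_other dc1 dc2]
      · by_cases dc1 : m ∣ c - a
        · -- zone (O, A) : φ = (b, c+1)
          have hd1' : ¬ m ∣ c + 1 - a := by
            intro hcon
            have h1 : m ∣ 1 := by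
              have he : (1 : ℤ) = (c + 1 - a) - (c - a) := by ring
              rw [he]; exact dvd_sub hcon dc1
            have := Int.le_of_dvd one_pos h1; omega
          have hd2' : m ∣ c + 1 - a - 1 := by
            have he : c + 1 - a - 1 = c - a := by ring
            rw [he]; exact dc1
          have hne1 : b ≠ c + 1 := by
            intro he
            apply db2
            have he2 : b - a - 1 = c - a := by omega
            rw [he2]; exact dc1
          have hv : keyphi m a (b, c) = (b, c + 1) := by
            simp [keyphi, db1, db2, dc1]
          have hv2 : keypsi m a (b, c + 1) = (b, c) := by
            simp [keypsi, db1, db2, hd1', hd2']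
          rw [hv]
          refine ⟨⟨?_, ?_, by show c + 1 < b; omega, by show b < c + 1 + m; omega⟩, hv2⟩
          · show sg m a b ∈ B
            rwa [sg_of_other db1 db2]
          · show sg m a (c + 1) ∉ B
            rw [sg_of_dvd2 hm hd2']
            have he : c + 1 - 1 = c := by ring
            rwa [he]
        · by_cases dc2 : m ∣ c - a - 1
          · -- zone (O, B1) : φ = (b, c-1)
            have hd1' : m ∣ c - 1 - a := by
              have he : c - 1 - a = c - a - 1 := by ring
              rw [he]; exact dc2
            have hne1 : b ≠ c - 1 + m := by
              intro he
              apply db1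
              have he2 : b - a = (c - a - 1) + m := by omega
              rw [he2]; exact dvd_add dc2 (dvd_refl m)
            have hv : keyphi m a (b, c) = (b, c - 1) := by
              simp [keyphi, db1, db2, dc1, dc2]
            have hv2 : keypsi m a (b, c - 1) = (b, c) := by
              simp [keypsi, db1, db2, hd1']
            rw [hv]
            refine ⟨⟨?_, ?_, by show c - 1 < b; omega, by show b < c - 1 + m; omega⟩, hv2⟩
            · show sg m a b ∈ B
              rwa [sg_of_other db1 db2]
            · show sg m a (c - 1) ∉ B
              rw [sg_of_dvd1 hd1']
              have he : c - 1 + 1 = c := by ring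
              rwa [he]
          · -- zone (O, O) : identity
            have hv : keyphi m a (b, c) = (b, c) := by
              simp [keyphi, db1, db2, dc1, dc2]
            have hv2 : keypsi m a (b, c) = (b, c) := by
              simp [keypsi, db1, db2, dc1, dc2]
            rw [hv]
            refine ⟨⟨?_, ?_, by show c < b; omega, by show b < c + m; omega⟩, hv2⟩
            · show sg m a b ∈ B
              rwa [sg_of_other db1 db2]
            · show sg m a c ∉ B
              rwa [sg_of_other dc1 dc2]
  -- assemble
  have himg : keypsi m a '' (Pk m S) = (Pk m B) \ {star} := by
    apply Set.Subset.antisymm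
    · rintro q ⟨p, hp, rfl⟩
      exact (hpsi_full p hp).1
    · intro q hq
      exact ⟨keyphi m a q, (hphi_full q hq).1, (hphi_full q hq).2⟩
  have hinj : Set.InjOn (keypsi m a) (Pk m S) := by
    intro q1 h1 q2 h2 he
    rw [← (hpsi_full q1 h1).2, ← (hpsi_full q2 h2).2, he]
  have hcard := Set.ncard_image_of_injOn hinj
  rw [himg] at hcard
  have hfin : (Pk m B).Finite := Pk_finite hmpos hBL
  have hdiff := Set.ncard_diff_singleton_add_one hstar_mem hfin
  omega



end KEY

section MAIN
variable {m : ℤ}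

theorem main_blevel (hm : 2 ≤ m) :
    ∀ n : ℕ, ∀ C D : Set ℤ, BetaLike C → BetaLike D → CoreSet m C → CoreSet m D →
      Dom C D → EqBelow C D → C ≠ D → (Pk m D).ncard = n → (Pk m C).ncard < n := by
  intro n
  induction n using Nat.strong_induction_on with
  | _ n IH =>
    intro C D hC hD hcC hcD hdom heqb hne hn
    have hmpos : (0 : ℤ) < m := by omega
    by_cases hrem : ∃ x, x ∈ D ∧ x - 1 ∉ D
    · obtain ⟨x0, hx0D, hx0nD⟩ := hrem
      set a := x0 - 1 with ha
      have hy0 : m ∣ (x0 - 1) - a := by rw [ha]; simp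
      have hy0B1 : (x0 - 1) + 1 ∈ D := by
        have he : x0 - 1 + 1 = x0 := by ring
        rw [he]; exact hx0D
      have hnoaddD : ∀ y, m ∣ y - a → y ∈ D → y + 1 ∈ D :=
        noadd_of_rem hmpos hcD hy0 hx0nD hy0B1
      have hkeyD : (Pk m (SD m a D)).ncard + 1 = (Pk m D).ncard :=
        key_count hm hD hcD hy0 hx0nD hy0B1
      have hSD_bl : BetaLike (SD m a D) := SD_betaLike hm hD
      have hSD_core : CoreSet m (SD m a D) := SD_core hm hcD
      by_cases hCrem : ∃ y, m ∣ y - a ∧ y ∉ C ∧ y + 1 ∈ C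
      · -- case (ii) : C also has a removable a-corner
        obtain ⟨y1, hy1d, hy1n, hy1m⟩ := hCrem
        have hnoaddC : ∀ y, m ∣ y - a → y ∈ C → y + 1 ∈ C :=
          noadd_of_rem hmpos hcC hy1d hy1n hy1m
        have hkeyC : (Pk m (SD m a C)).ncard + 1 = (Pk m C).ncard :=
          key_count hm hC hcC hy1d hy1n hy1m
        have hdom' : Dom (SD m a C) (SD m a D) := dom_SD_SD hm hC hD hnoaddC hnoaddD hdom
        have hne' : SD m a C ≠ SD m a D := by
          intro h
          apply hne
          rw [← SD_SD hm (a := a) C, h, SD_SD hm]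
        have heqb' : EqBelow (SD m a C) (SD m a D) := by
          obtain ⟨M1, hM1⟩ := heqb
          obtain ⟨M2, hM2⟩ := eqBelow_SD (a := a) hm hC
          obtain ⟨M3, hM3⟩ := eqBelow_SD (a := a) hm hD
          refine ⟨min M1 (min M2 M3), fun x hx => ?_⟩
          rw [hM2 x (by omega), hM3 x (by omega)]
          exact hM1 x (by omega)
        have hlt : (Pk m (SD m a D)).ncard < n := by omega
        have := IH _ hlt (SD m a C) (SD m a D) (SD_betaLike hm hC) hSD_bl
          (SD_core hm hcC) hSD_core hdom' heqb' hne' rfl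
        omega
      · -- case (i) : C has no removable a-corner
        push_neg at hCrem
        have hnorem : ∀ y, m ∣ y - a → y + 1 ∈ C → y ∈ C := by
          intro y hy hy1
          by_contra h
          exact (hCrem y hy h) hy1
        have hdom' : Dom C (SD m a D) := dom_C_SD hm hC hD hnoaddD hnorem hdom
        by_cases hCeq : C = SD m a D
        · rw [hCeq]; omega
        · have heqb' : EqBelow C (SD m a D) := by
            obtain ⟨M1, hM1⟩ := heqb
            obtain ⟨M3, hM3⟩ := eqBelow_SD (a := a) hm hD
            refine ⟨min M1 M3, fun x hx => ?_⟩
            rw [hM3 x (by omega)]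
            exact hM1 x (by omega)
          have hlt : (Pk m (SD m a D)).ncard < n := by omega
          have := IH _ hlt C (SD m a D) hC hSD_bl hcC hSD_core hdom' heqb' hCeq rfl
          omega
    · -- no removable corner at all : D is an initial segment, contradiction
      exfalso
      push_neg at hrem
      exact hne (eq_of_no_corner hC hD (fun z hz => hrem z hz) hdom heqb)

end MAIN

section PART

/-- beta numbers -/
def bt (p : ℕ → ℕ) (i : ℕ) : ℤ := (p i : ℤ) - i

def Bset (p : ℕ → ℕ) : Set ℤ := Set.range (bt p)

/-- the leg set of a cell -/
def legS (p : ℕ → ℕ) (i j : ℕ) : Set ℕ := {i' : ℕ | i < i' ∧ j < p i'}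

variable {p : ℕ → ℕ}

lemma p_antitone (hp : IsPartitionFun p) : ∀ {i j : ℕ}, i ≤ j → p j ≤ p i := by
  intro i j hij
  induction j with
  | zero => have : i = 0 := by omega
            subst this; exact le_refl _
  | succ j ih =>
    rcases Nat.lt_or_ge i (j + 1) with h | h
    · exact le_trans (hp.1 j) (ih (by omega))
    · have : i = j + 1 := by omega
      subst this; exact le_refl _

lemma bt_strictAnti (hp : IsPartitionFun p) : StrictAnti (bt p) := by
  apply strictAnti_nat_of_succ_lt
  intro i
  have := hp.1 i
  simp only [bt]
  push_cast
  omega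

lemma bt_inj (hp : IsPartitionFun p) : Function.Injective (bt p) :=
  (bt_strictAnti hp).injective

lemma bt_lt_iff (hp : IsPartitionFun p) {i j : ℕ} : bt p j < bt p i ↔ i < j := by
  constructor
  · intro h
    by_contra hc
    push_neg at hc
    have := (bt_strictAnti hp).antitone (by exact_mod_cast hc)
    omega
  · exact fun h => bt_strictAnti hp h

/-- the canonical bound for a partition -/
lemma Bset_betaLike (hp : IsPartitionFun p) :
    ∃ N : ℕ, (∀ i, N ≤ i → p i = 0) ∧ BetaLike (Bset p) := by
  obtain ⟨N0, hN0⟩ := hp.2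
  refine ⟨N0 + p 0, fun i hi => hN0 i (by omega), ⟨(N0 : ℤ) + p 0, by positivity, ?_, ?_⟩⟩
  · intro z hz
    refine ⟨(-z).toNat, ?_⟩
    have h1 : (N0 : ℤ) ≤ -z := by omega
    have h2 : p (-z).toNat = 0 := hN0 _ (by omega)
    simp only [bt, h2]
    push_cast
    omega
  · rintro z hz ⟨i, rfl⟩
    have : p i ≤ p 0 := p_antitone hp (by omega)
    simp only [bt] at hz
    omega

lemma legS_finite (hp : IsPartitionFun p) (i j : ℕ) : (legS p i j).Finite := by
  obtain ⟨N0, hN0⟩ := hp.2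
  apply Set.Finite.subset (Set.finite_Icc 0 N0)
  rintro i' ⟨h1, h2⟩
  simp only [Set.mem_Icc]
  constructor
  · omega
  · by_contra h
    rw [hN0 i' (by omega)] at h2
    omega

lemma ncard_Icc_nat (a b : ℕ) : (Set.Icc a b).ncard = b + 1 - a := by
  have : (Set.Icc a b) = ((Finset.Icc a b : Finset ℕ) : Set ℕ) := by simp
  rw [this, Set.ncard_coe_finset]
  simp [Nat.card_Icc]

/-- the leg set is the interval `(i, i + L]`. -/
lemma legS_interval (hp : IsPartitionFun p) (i j : ℕ) :
    ∀ i', i' ∈ legS p i j ↔ (i < i' ∧ i' ≤ i + (legS p i j).ncard) := by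
  have hfin := legS_finite hp i j
  set n := (legS p i j).ncard with hn
  have hdc : ∀ x y, i < x → x ≤ y → y ∈ legS p i j → x ∈ legS p i j := by
    rintro x y hx hxy ⟨h1, h2⟩
    exact ⟨hx, by have := p_antitone hp hxy; omega⟩
  intro i'
  constructor
  · rintro hmem
    obtain ⟨h1, h2⟩ := hmem
    refine ⟨h1, ?_⟩
    by_contra hgt
    push_neg at hgt
    have hsub : Set.Icc (i + 1) i' ⊆ legS p i j := by
      intro x hx
      simp only [Set.mem_Icc] at hx
      exact hdc x i' (by omega) (by omega) ⟨h1, h2⟩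
    have hle := Set.ncard_le_ncard hsub hfin
    rw [ncard_Icc_nat] at hle
    omega
  · rintro ⟨h1, h2⟩
    by_contra hno
    have hub : ∀ y ∈ legS p i j, y < i' := by
      intro y hy
      by_contra hge
      push_neg at hge
      exact hno (hdc i' y h1 hge hy)
    have hsub : legS p i j ⊆ Set.Icc (i + 1) (i' - 1) := by
      intro y hy
      have := hub y hy
      have := hy.1
      simp only [Set.mem_Icc]
      omega
    have hle := Set.ncard_le_ncard hsub (Set.finite_Icc _ _)
    rw [ncard_Icc_nat] at hle
    omega

/-- hook length via beta numbers. -/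
lemma hook_eq (i j : ℕ) (hj : j < p i) :
    (hookLen p i j : ℤ) = bt p i - ((j : ℤ) - i - (legS p i j).ncard) := by
  have : hookLen p i j = (p i - j) + (legS p i j).ncard := rfl
  rw [this, bt]
  have : ((p i - j : ℕ) : ℤ) = (p i : ℤ) - j := by omega
  push_cast
  omega

/-- the cell gap `cg i j` is not a beta number. -/
lemma cg_not_mem (hp : IsPartitionFun p) (i j : ℕ) (hj : j < p i) :
    (j : ℤ) - i - (legS p i j).ncard ∉ Bset p := by
  set L := (legS p i j).ncard with hL
  rintro ⟨i2, hi2⟩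
  -- bt p i2 = j - i - L < bt p i so i2 > i
  have hlt : bt p i2 < bt p i := by
    rw [hi2, bt]
    omega
  have hi2i : i < i2 := (bt_lt_iff hp).mp hlt
  have hint := legS_interval hp i j i2
  rcases Nat.lt_or_ge (i + L) i2 with h | h
  · -- i2 > i + L : p i2 ≤ j but bt value forces p i2 > j
    have : ¬ (i2 ∈ legS p i j) := by
      rw [hint]; omega
    have hple : p i2 ≤ j := by
      by_contra hc
      exact this ⟨hi2i, by omega⟩
    rw [bt] at hi2
    omega
  · -- i < i2 ≤ i + L : p i2 > j but bt value forces p i2 ≤ j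
    have hmem : i2 ∈ legS p i j := by
      rw [hint]; exact ⟨hi2i, by omega⟩
    have hpgt : j < p i2 := hmem.2
    rw [bt] at hi2
    omega

end PART

section GAPS
variable {p : ℕ → ℕ}

/-- gaps strictly between `c` and `x`. -/
def GapsIn (p : ℕ → ℕ) (c x : ℤ) : Set ℤ := {z : ℤ | c < z ∧ z < x ∧ z ∉ Bset p}

def GapsBelow (p : ℕ → ℕ) (x : ℤ) : Set ℤ := {z : ℤ | z < x ∧ z ∉ Bset p}

lemma gapsBelow_finite (hp : IsPartitionFun p) (x : ℤ) : (GapsBelow p x).Finite := by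
  obtain ⟨N, hN, hbl⟩ := Bset_betaLike hp
  obtain ⟨N', hN'0, hlo, hhi⟩ := hbl
  apply Set.Finite.subset (Set.finite_Icc (-N') x)
  rintro z ⟨h1, h2⟩
  simp only [Set.mem_Icc]
  refine ⟨?_, by omega⟩
  by_contra h
  exact h2 (hlo z (by omega))

lemma gapsIn_finite (hp : IsPartitionFun p) (c x : ℤ) : (GapsIn p c x).Finite := by
  apply Set.Finite.subset (gapsBelow_finite hp x)
  rintro z ⟨h1, h2, h3⟩
  exact ⟨h2, h3⟩

lemma ncard_Ioo_int (a b : ℤ) : (Set.Ioo a b).ncard = (b - a - 1).toNat := by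
  have : (Set.Ioo a b) = ((Finset.Ioo a b : Finset ℤ) : Set ℤ) := by simp
  rw [this, Set.ncard_coe_finset]
  simp [Int.card_Ioo]

/-- no beta numbers strictly between consecutive beta numbers. -/
lemma no_bt_between (hp : IsPartitionFun p) (i : ℕ) {z : ℤ}
    (h1 : bt p (i + 1) < z) (h2 : z < bt p i) : z ∉ Bset p := by
  rintro ⟨i2, rfl⟩
  have ha : i < i2 := (bt_lt_iff hp).mp h2
  have hb : i2 < i + 1 := (bt_lt_iff hp).mp h1
  omega

lemma gapsBelow_count (hp : IsPartitionFun p) (i : ℕ) :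
    (GapsBelow p (bt p i)).ncard = p i := by
  obtain ⟨N, hN, hbl⟩ := Bset_betaLike hp
  have base : ∀ i, N ≤ i → (GapsBelow p (bt p i)).ncard = p i := by
    intro i hi
    have hpz : p i = 0 := hN i hi
    have : GapsBelow p (bt p i) = ∅ := by
      ext z
      simp only [GapsBelow, Set.mem_setOf_eq, Set.mem_empty_iff_false, iff_false, not_and,
        not_not]
      intro hz
      refine ⟨(-z).toNat, ?_⟩
      have hbti : bt p i = -(i : ℤ) := by simp [bt, hpz]
      rw [hbti] at hz
      have h2 : p (-z).toNat = 0 := hN _ (by omega)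
      simp only [bt, h2]
      push_cast
      omega
    rw [this, Set.ncard_empty, hpz]
  have step : ∀ i, (GapsBelow p (bt p (i + 1))).ncard = p (i + 1) →
      (GapsBelow p (bt p i)).ncard = p i := by
    intro i ih
    have hsplit : GapsBelow p (bt p i) =
        GapsBelow p (bt p (i + 1)) ∪ Set.Ioo (bt p (i + 1)) (bt p i) := by
      ext z
      simp only [GapsBelow, Set.mem_setOf_eq, Set.mem_union, Set.mem_Ioo]
      constructor
      · rintro ⟨h1, h2⟩
        rcases lt_or_ge z (bt p (i + 1)) with h | h
        · exact Or.inl ⟨h, h2⟩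
        · right
          refine ⟨?_, h1⟩
          rcases eq_or_lt_of_le h with h' | h'
          · exact absurd ⟨i + 1, h'⟩ h2
          · exact h'
      · rintro (⟨h1, h2⟩ | ⟨h1, h2⟩)
        · have hlt : bt p (i + 1) < bt p i := bt_strictAnti hp (by omega)
          exact ⟨by omega, h2⟩
        · exact ⟨h2, no_bt_between hp i h1 h2⟩
    have hdisj : Disjoint (GapsBelow p (bt p (i + 1))) (Set.Ioo (bt p (i + 1)) (bt p i)) := by
      rw [Set.disjoint_left]
      rintro z ⟨h1, _⟩ ⟨h2, _⟩
      omega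
    rw [hsplit, Set.ncard_union_eq hdisj (gapsBelow_finite hp _) (Set.finite_Ioo _ _), ih,
      ncard_Ioo_int]
    have h1 := hp.1 i
    simp only [bt]
    omega
  -- downward induction
  have key : ∀ k : ℕ, (GapsBelow p (bt p (N - k))).ncard = p (N - k) := by
    intro k
    induction k with
    | zero => exact base N (by omega)
    | succ k ih =>
      rcases Nat.lt_or_ge k N with h | h
      · rcases Nat.lt_or_ge (k + 1) N with h2 | h2
        · have he : N - k = (N - (k + 1)) + 1 := by omega
          rw [he] at ih
          exact step _ ih
        · have he : N - (k + 1) = 0 := by omega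
          have he2 : N - k = 1 := by omega
          rw [he2] at ih
          rw [he]
          exact step 0 ih
      · have he : N - (k + 1) = N - k := by omega
        rw [he]
        exact ih
  rcases Nat.lt_or_ge i N with h | h
  · have he : i = N - (N - i) := by omega
    rw [he]
    exact key (N - i)
  · exact base i h

end GAPS

section CELLS
variable {p : ℕ → ℕ}

lemma gapsIn_cg (hp : IsPartitionFun p) (i j : ℕ) (hj : j < p i) :
    (GapsIn p ((j : ℤ) - i - (legS p i j).ncard) (bt p i)).ncard = p i - 1 - j := by
  set L := (legS p i j).ncard with hL
  set cg := (j : ℤ) - i - L with hcg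
  have hkeq := hook_eq (p := p) i j hj
  have hhk : hookLen p i j = (p i - j) + L := rfl
  have hcglt : cg < bt p i := by
    have h1 : 1 ≤ hookLen p i j := by
      rw [hhk]; omega
    omega
  -- B-elements in the open interval are the beta numbers of the leg
  have hBpart : Bset p ∩ Set.Ioo cg (bt p i) = bt p '' (legS p i j) := by
    ext z
    simp only [Set.mem_inter_iff, Set.mem_Ioo, Set.mem_image]
    constructor
    · rintro ⟨⟨i2, rfl⟩, hz1, hz2⟩
      have hi2 : i < i2 := (bt_lt_iff hp).mp hz2
      refine ⟨i2, ?_, rfl⟩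
      rw [legS_interval hp i j i2]
      refine ⟨hi2, ?_⟩
      by_contra hgt
      push_neg at hgt
      have : i2 ∉ legS p i j := by
        rw [legS_interval hp i j i2]; omega
      have hple : p i2 ≤ j := by
        by_contra hc
        exact this ⟨hi2, by omega⟩
      have : bt p i2 ≤ (j : ℤ) - i2 := by
        simp only [bt]; omega
      have hLL : (i : ℤ) + L < i2 := by exact_mod_cast (by omega : (i + L : ℕ) < i2)
      omega
    · rintro ⟨i', hi', rfl⟩
      have hmem := (legS_interval hp i j i').mp hi'
      have hpj : j < p i' := hi'.2
      constructor
      · exact ⟨i', rfl⟩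
      constructor
      · have : (j : ℤ) + 1 - (i + L) ≤ bt p i' := by
          simp only [bt]
          have h2 : (i' : ℤ) ≤ (i : ℤ) + L := by exact_mod_cast hmem.2
          omega
        omega
      · exact (bt_lt_iff hp).mpr hmem.1
  have hsplit : Set.Ioo cg (bt p i) =
      GapsIn p cg (bt p i) ∪ (Bset p ∩ Set.Ioo cg (bt p i)) := by
    ext z
    simp only [GapsIn, Set.mem_Ioo, Set.mem_union, Set.mem_setOf_eq, Set.mem_inter_iff]
    constructor
    · rintro ⟨h1, h2⟩
      by_cases hz : z ∈ Bset p
      · exact Or.inr ⟨hz, h1, h2⟩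
      · exact Or.inl ⟨h1, h2, hz⟩
    · rintro (⟨h1, h2, _⟩ | ⟨_, h1, h2⟩) <;> exact ⟨h1, h2⟩
  have hdisj : Disjoint (GapsIn p cg (bt p i)) (Bset p ∩ Set.Ioo cg (bt p i)) := by
    rw [Set.disjoint_left]
    rintro z ⟨_, _, hz⟩ ⟨hz2, _⟩
    exact hz hz2
  have himgcard : (bt p '' (legS p i j)).ncard = L := by
    rw [Set.ncard_image_of_injOn (Set.injOn_of_injective (bt_inj hp))]
  have hcount := congrArg Set.ncard hsplit
  rw [Set.ncard_union_eq hdisj (gapsIn_finite hp _ _)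
    ((legS_finite hp i j).image (bt p) |>.subset (by rw [hBpart])), hBpart, himgcard,
    ncard_Ioo_int] at hcount
  have hval : (bt p i - cg - 1).toNat = hookLen p i j - 1 := by omega
  rw [hval] at hcount
  omega

lemma hook_lt (hp : IsPartitionFun p) (i j : ℕ) (hj : j + 1 < p i) :
    hookLen p i (j + 1) < hookLen p i j := by
  have h1 : hookLen p i j = (p i - j) + (legS p i j).ncard := rfl
  have h2 : hookLen p i (j + 1) = (p i - (j + 1)) + (legS p i (j + 1)).ncard := rfl
  have hsub : legS p i (j + 1) ⊆ legS p i j := by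
    rintro i' ⟨ha, hb⟩
    exact ⟨ha, by omega⟩
  have hle := Set.ncard_le_ncard hsub (legS_finite hp i j)
  omega

lemma hook_strict (hp : IsPartitionFun p) (i : ℕ) : ∀ {j j' : ℕ}, j < j' → j' < p i →
    hookLen p i j' < hookLen p i j := by
  intro j j' hjj hj'
  induction j' with
  | zero => omega
  | succ j2 ih =>
    rcases Nat.lt_or_ge j j2 with h | h
    · exact lt_trans (hook_lt hp i j2 hj') (ih h (by omega))
    · have : j = j2 := by omega
      subst this
      exact hook_lt hp i j hj'

lemma gapsIn_mono (hp : IsPartitionFun p) (x : ℤ) {c1 c2 : ℤ} (h12 : c1 < c2) (h2x : c2 < x)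
    (h2g : c2 ∉ Bset p) : (GapsIn p c2 x).ncard < (GapsIn p c1 x).ncard := by
  have hsub : insert c2 (GapsIn p c2 x) ⊆ GapsIn p c1 x := by
    rintro z (rfl | ⟨ha, hb, hc⟩)
    · exact ⟨h12, h2x, h2g⟩
    · exact ⟨by omega, hb, hc⟩
  have h1 := Set.ncard_insert_of_notMem (by
      rintro ⟨ha, _, _⟩; omega : c2 ∉ GapsIn p c2 x) (gapsIn_finite hp c2 x)
  have h2 := Set.ncard_le_ncard hsub (gapsIn_finite hp c1 x)
  omega

lemma surj_gap (hp : IsPartitionFun p) (i : ℕ) (c : ℤ) (hcb : c < bt p i)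
    (hcnotin : c ∉ Bset p) : ∃ j, j < p i ∧ (j : ℤ) - i - (legS p i j).ncard = c := by
  set n := (GapsIn p c (bt p i)).ncard with hn
  have hnb : n + 1 ≤ p i := by
    have hsub : insert c (GapsIn p c (bt p i)) ⊆ GapsBelow p (bt p i) := by
      rintro z (rfl | ⟨ha, hb, hc'⟩)
      · exact ⟨hcb, hcnotin⟩
      · exact ⟨hb, hc'⟩
    have h1 := Set.ncard_insert_of_notMem (by
        rintro ⟨ha, _, _⟩; omega : c ∉ GapsIn p c (bt p i)) (gapsIn_finite hp c (bt p i))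
    have h2 := Set.ncard_le_ncard hsub (gapsBelow_finite hp (bt p i))
    rw [gapsBelow_count hp i] at h2
    omega
  set j := p i - 1 - n with hj
  have hjp : j < p i := by omega
  refine ⟨j, hjp, ?_⟩
  set cg := (j : ℤ) - i - (legS p i j).ncard with hcgdef
  have hcgn : (GapsIn p cg (bt p i)).ncard = n := by
    have h := gapsIn_cg hp i j hjp
    rw [← hcgdef] at h
    omega
  have hcgg : cg ∉ Bset p := cg_not_mem hp i j hjp
  have hcglt : cg < bt p i := by
    have hkeq := hook_eq (p := p) i j hjp
    have hhk : hookLen p i j = (p i - j) + (legS p i j).ncard := rfl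
    have h1 : 1 ≤ hookLen p i j := by rw [hhk]; omega
    omega
  rcases lt_trichotomy cg c with h | h | h
  · have := gapsIn_mono hp (bt p i) h hcb hcnotin
    omega
  · exact h
  · have := gapsIn_mono hp (bt p i) h hcglt hcgg
    omega

lemma coreSet_of_isCore {M : ℕ} (hp : IsPartitionFun p) (hM : 1 ≤ M) (hcore : IsCore M p) :
    CoreSet (M : ℤ) (Bset p) := by
  rintro b ⟨i, rfl⟩
  by_contra hno
  obtain ⟨j, hj, hcgeq⟩ := surj_gap hp i (bt p i - M) (by omega) hno
  have hkeq := hook_eq (p := p) i j hj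
  rw [hcgeq] at hkeq
  have : hookLen p i j = M := by omega
  exact hcore i j hj this

end CELLS

section TRANSFER
variable {p γ δ : ℕ → ℕ}

/-- the cell encoding map. -/
noncomputable def Emap (p : ℕ → ℕ) (x : ℕ × ℕ) : ℤ × ℤ :=
  (bt p x.1, (x.2 : ℤ) - x.1 - (legS p x.1 x.2).ncard)

lemma cells_ncard (hp : IsPartitionFun p) (k : ℕ) :
    {x : ℕ × ℕ | x.2 < p x.1 ∧ hookLen p x.1 x.2 ≤ k}.ncard
      = (Pk ((k : ℤ) + 1) (Bset p)).ncard := by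
  set Cells := {x : ℕ × ℕ | x.2 < p x.1 ∧ hookLen p x.1 x.2 ≤ k} with hCells
  have hmaps : ∀ x ∈ Cells, Emap p x ∈ Pk ((k : ℤ) + 1) (Bset p) := by
    rintro ⟨i, j⟩ hmem
    have hj : j < p i := hmem.1
    have hk : hookLen p i j ≤ k := hmem.2
    have hkeq := hook_eq (p := p) i j hj
    have hhk : hookLen p i j = (p i - j) + (legS p i j).ncard := rfl
    have h1 : 1 ≤ hookLen p i j := by rw [hhk]; omega
    refine ⟨⟨i, rfl⟩, cg_not_mem hp i j hj, ?_, ?_⟩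
    · show (j : ℤ) - i - (legS p i j).ncard < bt p i
      omega
    · show bt p i < ((j : ℤ) - i - (legS p i j).ncard) + ((k : ℤ) + 1)
      omega
  have hinj : Set.InjOn (Emap p) Cells := by
    rintro ⟨i, j⟩ hij ⟨i', j'⟩ hij' he
    have hj : j < p i := hij.1
    have hj' : j' < p i' := hij'.1
    simp only [Emap, Prod.mk.injEq] at he
    obtain ⟨he1, he2⟩ := he
    have hii : i = i' := bt_inj hp he1
    subst hii
    have hkeq := hook_eq (p := p) i j hj
    have hkeq' := hook_eq (p := p) i j' hj'
    have hhooks : hookLen p i j = hookLen p i j' := by omega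
    rcases lt_trichotomy j j' with h | h | h
    · have := hook_strict hp i h hj'
      omega
    · rw [h]
    · have := hook_strict hp i h hj
      omega
  have hsurj : ∀ q ∈ Pk ((k : ℤ) + 1) (Bset p), ∃ x ∈ Cells, Emap p x = q := by
    rintro ⟨b, c⟩ ⟨hb, hc, h3, h4⟩
    simp only at hb hc h3 h4
    obtain ⟨i, rfl⟩ := hb
    obtain ⟨j, hj, hcg⟩ := surj_gap hp i c h3 hc
    have hkeq := hook_eq (p := p) i j hj
    rw [hcg] at hkeq
    have hE : Emap p (i, j) = (bt p i, c) := by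
      simp only [Emap]
      rw [hcg]
    exact ⟨(i, j), ⟨hj, show hookLen p i j ≤ k by omega⟩, hE⟩
  have himg : Emap p '' Cells = Pk ((k : ℤ) + 1) (Bset p) := by
    apply Set.Subset.antisymm
    · rintro q ⟨x, hx, rfl⟩
      exact hmaps x hx
    · intro q hq
      obtain ⟨x, hx, he⟩ := hsurj q hq
      exact ⟨x, hx, he⟩
  rw [← himg, Set.ncard_image_of_injOn hinj]

lemma idx_finite (hp : IsPartitionFun p) (x : ℤ) : {i : ℕ | x ≤ bt p i}.Finite := by
  apply Set.Finite.subset (Set.finite_Icc 0 ((p 0 : ℤ) - x).toNat)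
  intro i hi
  simp only [Set.mem_setOf_eq, bt] at hi
  have : p i ≤ p 0 := p_antitone hp (by omega)
  simp only [Set.mem_Icc]
  omega

lemma Fc_Bset (hp : IsPartitionFun p) (x : ℤ) :
    Fc (Bset p) x = {i : ℕ | x ≤ bt p i}.ncard := by
  have he : Bset p ∩ Set.Ici x = bt p '' {i : ℕ | x ≤ bt p i} := by
    ext z
    simp only [Set.mem_inter_iff, Set.mem_Ici, Set.mem_image, Set.mem_setOf_eq]
    constructor
    · rintro ⟨⟨i, rfl⟩, h2⟩
      exact ⟨i, h2, rfl⟩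
    · rintro ⟨i, h1, rfl⟩
      exact ⟨⟨i, rfl⟩, h1⟩
  rw [Fc, he, Set.ncard_image_of_injOn (Set.injOn_of_injective (bt_inj hp))]

lemma dom_transfer (hγ : IsPartitionFun γ) (hδ : IsPartitionFun δ)
    (hsub : ∀ i, γ i ≤ δ i) : Dom (Bset γ) (Bset δ) := by
  intro x
  rw [Fc_Bset hγ, Fc_Bset hδ]
  apply Set.ncard_le_ncard _ (idx_finite hδ x)
  intro i hi
  simp only [Set.mem_setOf_eq, bt] at hi ⊢
  have := hsub i
  omega

lemma eqBelow_transfer (hγ : IsPartitionFun γ) (hδ : IsPartitionFun δ) :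
    EqBelow (Bset γ) (Bset δ) := by
  obtain ⟨N1, hN1⟩ := hγ.2
  obtain ⟨N2, hN2⟩ := hδ.2
  refine ⟨-(N1 : ℤ) - N2, fun x hx => ?_⟩
  rw [Fc_Bset hγ, Fc_Bset hδ]
  have hset : ∀ (q : ℕ → ℕ) (N : ℕ), (∀ i, N ≤ i → q i = 0) → ((N : ℤ) ≤ -x) →
      {i : ℕ | x ≤ bt q i} = {i : ℕ | (i : ℤ) ≤ -x} := by
    intro q N hN hNx
    ext i
    simp only [Set.mem_setOf_eq, bt]
    constructor
    · intro h
      by_contra hc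
      push_neg at hc
      have : q i = 0 := hN i (by omega)
      omega
    · intro h
      have : (0 : ℤ) ≤ q i := by positivity
      omega
  rw [hset γ N1 hN1 (by omega), hset δ N2 hN2 (by omega)]

lemma neq_helper (hA : IsPartitionFun γ) (hB : IsPartitionFun δ) (i : ℕ)
    (IH : ∀ i' < i, γ i' = δ i') (hmem : bt γ i ∈ Bset δ) (hlt : bt δ i < bt γ i) : False := by
  obtain ⟨i3, hi3⟩ := hmem
  rcases lt_trichotomy i3 i with h | h | h
  · have he : bt δ i3 = bt γ i3 := by
      simp only [bt, IH i3 h]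
    rw [hi3] at he
    have := bt_inj hA he
    omega
  · subst h
    rw [hi3] at hlt
    omega
  · have h1 : bt δ i3 < bt δ i := bt_strictAnti hB h
    omega

lemma neq_transfer (hγ : IsPartitionFun γ) (hδ : IsPartitionFun δ)
    (hne : γ ≠ δ) : Bset γ ≠ Bset δ := by
  intro hset
  apply hne
  funext i
  induction i using Nat.strong_induction_on with
  | _ i IH =>
    have h1 : bt γ i ∈ Bset δ := by
      rw [← hset]; exact ⟨i, rfl⟩
    have h2 : bt δ i ∈ Bset γ := by
      rw [hset]; exact ⟨i, rfl⟩
    rcases lt_trichotomy (bt δ i) (bt γ i) with h | h | h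
    · exact absurd (neq_helper hγ hδ i IH h1 h) (fun h => h)
    · simp only [bt] at h
      omega
    · exact absurd (neq_helper hδ hγ i (fun i' hi' => (IH i' hi').symm) h2 h) (fun h => h)

lemma core1_empty (hp : IsPartitionFun p) (hcore : IsCore 1 p) : p = fun _ => 0 := by
  by_contra hne
  have hex : ∃ i, 0 < p i := by
    by_contra hno
    push_neg at hno
    exact hne (funext fun i => by have := hno i; omega)
  obtain ⟨N0, hN0⟩ := hp.2
  have hfin : {i : ℕ | 0 < p i}.Finite := by
    apply Set.Finite.subset (Set.finite_Icc 0 N0)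
    intro i hi
    simp only [Set.mem_setOf_eq] at hi
    simp only [Set.mem_Icc]
    constructor
    · omega
    · by_contra h
      rw [hN0 i (by omega)] at hi
      omega
  obtain ⟨g, hg, hgmax⟩ : ∃ g ∈ {i : ℕ | 0 < p i}, ∀ i' ∈ {i : ℕ | 0 < p i}, id g ≤ id i' → id g = id i' := by
    obtain ⟨g, hg, hmax⟩ := Set.exists_max_image _ id hfin hex
    exact ⟨g, hg, fun i' hi' h => le_antisymm h (hmax i' hi')⟩
  simp only [Set.mem_setOf_eq] at hg
  have hgm : ∀ i' > g, p i' = 0 := by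
    intro i' hi'
    by_contra h
    have := hgmax i' (by simp only [Set.mem_setOf_eq]; omega) (by simp only [id]; omega)
    simp only [id] at this
    omega
  have hleg : legS p g (p g - 1) = ∅ := by
    ext i'
    simp only [legS, Set.mem_setOf_eq, Set.mem_empty_iff_false, iff_false, not_and]
    intro h1
    rw [hgm i' h1]
    omega
  have hhook : hookLen p g (p g - 1) = 1 := by
    have : hookLen p g (p g - 1) = (p g - (p g - 1)) + (legS p g (p g - 1)).ncard := rfl
    rw [this, hleg, Set.ncard_empty]
    omega
  exact hcore g (p g - 1) (by omega) hhook

end TRANSFER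

end Stmt14Aux

open Stmt14Aux in
/-- If the `(k+1)`-core `γ` is strictly contained in the `(k+1)`-core `δ`, then `γ` has
strictly fewer cells with `k`-bounded hook than `δ`. -/
theorem stmt14 (k : ℕ) (γ δ : ℕ → ℕ)
    (hγ : IsPartitionFun γ) (hγcore : IsCore (k + 1) γ)
    (hδ : IsPartitionFun δ) (hδcore : IsCore (k + 1) δ)
    (hsub : ∀ i, γ i ≤ δ i) (hne : γ ≠ δ) :
    Set.ncard {x : ℕ × ℕ | x.2 < γ x.1 ∧ hookLen γ x.1 x.2 ≤ k}
      < Set.ncard {x : ℕ × ℕ | x.2 < δ x.1 ∧ hookLen δ x.1 x.2 ≤ k} := by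
  rcases Nat.eq_zero_or_pos k with hk0 | hkpos
  · subst hk0
    have h1 := core1_empty hγ hγcore
    have h2 := core1_empty hδ hδcore
    exact absurd (h1.trans h2.symm) hne
  · have hm : (2 : ℤ) ≤ (k : ℤ) + 1 := by omega
    obtain ⟨N1, _, hblγ⟩ := Bset_betaLike hγ
    obtain ⟨N2, _, hblδ⟩ := Bset_betaLike hδ
    have hcoreγ : CoreSet ((k : ℤ) + 1) (Bset γ) := by
      have := coreSet_of_isCore (M := k + 1) hγ (by omega) hγcore
      have he : ((k + 1 : ℕ) : ℤ) = (k : ℤ) + 1 := by push_cast; ring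
      rwa [he] at this
    have hcoreδ : CoreSet ((k : ℤ) + 1) (Bset δ) := by
      have := coreSet_of_isCore (M := k + 1) hδ (by omega) hδcore
      have he : ((k + 1 : ℕ) : ℤ) = (k : ℤ) + 1 := by push_cast; ring
      rwa [he] at this
    rw [cells_ncard hγ k, cells_ncard hδ k]
    exact main_blevel hm _ (Bset γ) (Bset δ) hblγ hblδ hcoreγ hcoreδ
      (dom_transfer hγ hδ hsub) (eqBelow_transfer hγ hδ) (neq_transfer hγ hδ hne) rfl
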